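/- For nonnegative integers m1, m2, k1, k2, the double-indexed poly-Bernoulli numbers with negative upper indices satisfy the duality B_{m1,m2}^{(-k1,-k2)} = B_{k1,k2}^{(-m1,-m2)}. -/
import Mathlib


/-- Stirling numbers of the second kind. -/
def S2 : ℕ → ℕ → ℕ
  | 0, 0 => 1
  | 0, _ + 1 => 0
  | _ + 1, 0 => 0
  | n + 1, m + 1 => S2 n m + (m + 1) * S2 n (m + 1)

lemma S2_zero_right (n : ℕ) : S2 (n+1) 0 = 0 := rfl

lemma S2_succ (n m : ℕ) : S2 (n+1) (m+1) = S2 n m + (m+1) * S2 n (m+1) := rfl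

lemma S2_eq_zero {n m : ℕ} (h : n < m) : S2 n m = 0 := by
  induction n generalizing m with
  | zero => cases m with
    | zero => omega
    | succ m => rfl
  | succ n ih =>
    cases m with
    | zero => omega
    | succ m =>
      rw [S2_succ, ih (by omega), ih (by omega)]
      ring

lemma int_choose_shift (x j : ℕ) :
    ((x:ℤ) - j) * (Nat.choose x j : ℤ) = (j+1) * (Nat.choose x (j+1) : ℤ) := by
  rcases le_or_gt j x with h | h
  · have := Nat.choose_succ_right_eq x j
    have h2 : ((x.choose (j+1) * (j+1) : ℕ) : ℤ) = ((x.choose j * (x - j) : ℕ) : ℤ) := by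
      rw [this]
    push_cast [h] at h2
    linarith
  · rw [Nat.choose_eq_zero_of_lt h, Nat.choose_eq_zero_of_lt (by omega)]
    push_cast; ring

open Finset in
/-- symmetric kernel -/
def Rc (a b j1 j2 : ℕ) : ℤ :=
  ∑ n ∈ Finset.range (a + b + 1),
    (if a ≤ n then (Nat.choose b (n - a) : ℤ) else 0) * (S2 (n+1) (j1+1) : ℤ) *
      (S2 (a + b - n + 1) (j2+1) : ℤ)

lemma Rc_eq_zero_left {a b j1 : ℕ} (h : a + b < j1) (j2 : ℕ) : Rc a b j1 j2 = 0 := by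
  unfold Rc
  apply Finset.sum_eq_zero
  intro n hn
  rw [Finset.mem_range] at hn
  rw [S2_eq_zero (show n+1 < j1+1 by omega)]
  push_cast; ring

lemma Rc_eq_zero_right {a b j2 : ℕ} (h : a + b < j2) (j1 : ℕ) : Rc a b j1 j2 = 0 := by
  unfold Rc
  apply Finset.sum_eq_zero
  intro n hn
  rw [Finset.mem_range] at hn
  rw [S2_eq_zero (show a + b - n + 1 < j2+1 by omega)]
  push_cast; ring

lemma Rc_rec_left (k1 k2 j1 j2 : ℕ) :
    Rc (k1+1) k2 j1 j2 =
      (if j1 = 0 then 0 else Rc k1 k2 (j1-1) j2) + (j1+1) * Rc k1 k2 j1 j2 := by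
  unfold Rc
  have h1 : k1 + 1 + k2 + 1 = (k1 + k2 + 1) + 1 := by ring
  rw [h1, Finset.sum_range_succ']
  have hz : (if k1 + 1 ≤ 0 then ((Nat.choose k2 (0 - (k1+1))):ℤ) else 0) *
      (S2 (0+1) (j1+1) : ℤ) * (S2 (k1 + 1 + k2 - 0 + 1) (j2+1) : ℤ) = 0 := by
    rw [if_neg (by omega)]; ring
  rw [hz, add_zero]
  have key : ∀ n ∈ Finset.range (k1 + k2 + 1),
      (if k1 + 1 ≤ n + 1 then ((Nat.choose k2 (n + 1 - (k1+1))):ℤ) else 0) *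
        (S2 (n+1+1) (j1+1) : ℤ) * (S2 (k1 + 1 + k2 - (n+1) + 1) (j2+1) : ℤ)
      = (if k1 ≤ n then ((Nat.choose k2 (n - k1)):ℤ) else 0) *
          (S2 (n+1) j1 : ℤ) * (S2 (k1 + k2 - n + 1) (j2+1) : ℤ)
        + (j1+1) * ((if k1 ≤ n then ((Nat.choose k2 (n - k1)):ℤ) else 0) *
          (S2 (n+1) (j1+1) : ℤ) * (S2 (k1 + k2 - n + 1) (j2+1) : ℤ)) := by
    intro n hn
    rw [Finset.mem_range] at hn
    have e1 : n + 1 - (k1+1) = n - k1 := by omega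
    have e2 : k1 + 1 + k2 - (n+1) = k1 + k2 - n := by omega
    simp only [e1, e2, Nat.add_le_add_iff_right, S2_succ]
    push_cast; ring
  rw [Finset.sum_congr rfl key, Finset.sum_add_distrib, ← Finset.mul_sum]
  congr 1
  rcases j1 with _ | j
  · rw [Finset.sum_eq_zero, if_pos rfl]
    intro n hn
    rw [show S2 (n+1) 0 = 0 from rfl]
    push_cast; ring
  · rw [if_neg (by omega)]
    rfl

lemma Rc_rec_right (k1 k2 j1 j2 : ℕ) :
    Rc k1 (k2+1) j1 j2 =
      (if j1 = 0 then 0 else Rc k1 k2 (j1-1) j2)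
      + (if j2 = 0 then 0 else Rc k1 k2 j1 (j2-1))
      + (j1+j2+2) * Rc k1 k2 j1 j2 := by
  have hsplit : ∀ n : ℕ, (if k1 ≤ n then ((Nat.choose (k2+1) (n - k1)):ℤ) else 0)
      = (if k1 ≤ n then ((Nat.choose k2 (n - k1)):ℤ) else 0)
        + (if k1 + 1 ≤ n then ((Nat.choose k2 (n - (k1+1))):ℤ) else 0) := by
    intro n
    split_ifs with h1 h2 h3
    · rw [show n - k1 = (n - (k1+1)) + 1 by omega, Nat.choose_succ_succ]
      push_cast; ring
    · rw [show n - k1 = 0 by omega]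
      simp
    · omega
    · ring
  have hB : (∑ n ∈ Finset.range (k1 + k2 + 1 + 1),
        (if k1 + 1 ≤ n then ((Nat.choose k2 (n - (k1+1))):ℤ) else 0) *
          (S2 (n+1) (j1+1) : ℤ) * (S2 (k1 + (k2+1) - n + 1) (j2+1) : ℤ))
      = Rc (k1+1) k2 j1 j2 := by
    unfold Rc
    rw [show k1 + 1 + k2 + 1 = k1 + k2 + 1 + 1 by omega]
    apply Finset.sum_congr rfl
    intro n _
    rw [show k1 + 1 + k2 - n = k1 + (k2+1) - n by omega]
  have expand : Rc k1 (k2+1) j1 j2 =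
      (∑ n ∈ Finset.range (k1 + k2 + 1 + 1),
        (if k1 ≤ n then ((Nat.choose k2 (n - k1)):ℤ) else 0) *
          (S2 (n+1) (j1+1) : ℤ) * (S2 (k1 + (k2+1) - n + 1) (j2+1) : ℤ))
      + Rc (k1+1) k2 j1 j2 := by
    rw [← hB, ← Finset.sum_add_distrib]
    unfold Rc
    rw [show k1 + (k2+1) + 1 = k1 + k2 + 1 + 1 by omega]
    apply Finset.sum_congr rfl
    intro n _
    rw [hsplit]
    ring
  rw [expand, Finset.sum_range_succ]
  have hlast : (if k1 ≤ k1 + k2 + 1 then ((Nat.choose k2 (k1 + k2 + 1 - k1)):ℤ) else 0) *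
      (S2 (k1+k2+1+1) (j1+1) : ℤ) * (S2 (k1 + (k2+1) - (k1+k2+1) + 1) (j2+1) : ℤ) = 0 := by
    rw [if_pos (by omega), show k1 + k2 + 1 - k1 = k2 + 1 by omega,
      Nat.choose_eq_zero_of_lt (by omega)]
    push_cast; ring
  rw [hlast, add_zero]
  have key : ∀ n ∈ Finset.range (k1 + k2 + 1),
      (if k1 ≤ n then ((Nat.choose k2 (n - k1)):ℤ) else 0) *
        (S2 (n+1) (j1+1) : ℤ) * (S2 (k1 + (k2+1) - n + 1) (j2+1) : ℤ)
      = (if k1 ≤ n then ((Nat.choose k2 (n - k1)):ℤ) else 0) *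
          (S2 (n+1) (j1+1) : ℤ) * (S2 (k1 + k2 - n + 1) j2 : ℤ)
        + (j2+1) * ((if k1 ≤ n then ((Nat.choose k2 (n - k1)):ℤ) else 0) *
          (S2 (n+1) (j1+1) : ℤ) * (S2 (k1 + k2 - n + 1) (j2+1) : ℤ)) := by
    intro n hn
    rw [Finset.mem_range] at hn
    have hs : (S2 (k1 + (k2+1) - n + 1) (j2+1) : ℤ)
        = (S2 (k1 + k2 - n + 1) j2 : ℤ) + (j2+1) * (S2 (k1 + k2 - n + 1) (j2+1) : ℤ) := by
      rw [show k1 + (k2+1) - n + 1 = (k1 + k2 - n + 1) + 1 by omega, S2_succ]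
      push_cast; ring
    rw [hs]
    ring
  rw [Finset.sum_congr rfl key, Finset.sum_add_distrib, ← Finset.mul_sum, Rc_rec_left]
  have h2 : (∑ n ∈ Finset.range (k1 + k2 + 1),
      (if k1 ≤ n then ((Nat.choose k2 (n - k1)):ℤ) else 0) *
        (S2 (n+1) (j1+1) : ℤ) * (S2 (k1 + k2 - n + 1) j2 : ℤ))
      = (if j2 = 0 then 0 else Rc k1 k2 j1 (j2-1)) := by
    rcases j2 with _ | j
    · rw [if_pos rfl]
      apply Finset.sum_eq_zero
      intro n hn
      rw [show S2 (k1 + k2 - n + 1) 0 = 0 from rfl]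
      push_cast; ring
    · rw [if_neg (by omega)]
      rfl
  rw [h2]
  have h3 : (∑ n ∈ Finset.range (k1 + k2 + 1),
      (if k1 ≤ n then ((Nat.choose k2 (n - k1)):ℤ) else 0) *
        (S2 (n+1) (j1+1) : ℤ) * (S2 (k1 + k2 - n + 1) (j2+1) : ℤ)) = Rc k1 k2 j1 j2 := rfl
  rw [h3]
  push_cast
  ring

lemma shift_sum (V : ℕ) (f g : ℕ → ℤ) (htop : f V = 0) :
    ∑ j ∈ Finset.range (V+1), f j * g (j+1)
      = ∑ j ∈ Finset.range (V+1), (if j = 0 then 0 else f (j-1)) * g j := by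
  rw [Finset.sum_range_succ' (fun j => (if j = 0 then 0 else f (j-1)) * g j) V]
  rw [Finset.sum_range_succ (fun j => f j * g (j+1)) V]
  simp [htop]

lemma S2_one (j : ℕ) : (S2 1 (j+1) : ℤ) = if j = 0 then 1 else 0 := by
  rcases j with _ | j
  · rfl
  · rw [if_neg (Nat.succ_ne_zero _)]
    rw [S2_succ, show S2 0 (j+1) = 0 from rfl, show S2 0 (j+2) = 0 from rfl]
    push_cast; ring

lemma Rc_zero_zero (j1 j2 : ℕ) :
    Rc 0 0 j1 j2 = (if j1 = 0 then 1 else 0) * (if j2 = 0 then 1 else 0) := by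
  unfold Rc
  rw [Finset.sum_range_one, if_pos (le_refl 0)]
  norm_num
  rw [S2_one, S2_one]
  split_ifs <;> ring

lemma lemA_base (V : ℕ) (x y : ℕ) :
    (1 : ℤ) = ∑ j1 ∈ Finset.range (V+1), ∑ j2 ∈ Finset.range (V+1),
      (Nat.factorial j1 : ℤ) * (Nat.factorial j2 : ℤ) * Rc 0 0 j1 j2 *
        (Nat.choose x j1 : ℤ) * (Nat.choose y j2 : ℤ) := by
  have h : ∀ j1 ∈ Finset.range (V+1), (∑ j2 ∈ Finset.range (V+1),
      (Nat.factorial j1 : ℤ) * (Nat.factorial j2 : ℤ) * Rc 0 0 j1 j2 *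
        (Nat.choose x j1 : ℤ) * (Nat.choose y j2 : ℤ)) = if j1 = 0 then 1 else 0 := by
    intro j1 _
    rcases Nat.eq_zero_or_pos j1 with h1 | h1
    · subst h1
      rw [if_pos rfl]
      rw [Finset.sum_eq_single 0]
      · rw [Rc_zero_zero]; simp [Nat.factorial]
      · intro j2 _ hj2
        rw [Rc_zero_zero, if_neg hj2]; ring
      · intro h; exact absurd (Finset.mem_range.mpr (by omega)) h
    · rw [if_neg (by omega)]
      apply Finset.sum_eq_zero
      intro j2 _
      rw [Rc_zero_zero, if_neg (by omega)]; ring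
  rw [Finset.sum_congr rfl h, Finset.sum_ite_eq' (Finset.range (V+1)) 0 (fun _ => (1:ℤ)),
    if_pos (Finset.mem_range.mpr (by omega))]

/-- auxiliary inner sum -/
def Fa (k1 k2 V y j1 : ℕ) : ℤ :=
  ∑ j2 ∈ Finset.range (V+1),
    ((j1:ℤ)+1) * (Nat.factorial j1 : ℤ) * (Nat.factorial j2 : ℤ) * Rc k1 k2 j1 j2 *
      (Nat.choose y j2 : ℤ)

lemma choose_mul_xp1 (x j1 : ℕ) :
    ((x:ℤ)+1) * (Nat.choose x j1 : ℤ)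
      = ((j1:ℤ)+1)*(Nat.choose x (j1+1) : ℤ) + ((j1:ℤ)+1)*(Nat.choose x j1 : ℤ) := by
  have h := int_choose_shift x j1
  calc ((x:ℤ)+1) * (Nat.choose x j1 : ℤ)
      = ((x:ℤ)-j1) * (Nat.choose x j1 : ℤ) + ((j1:ℤ)+1)*(Nat.choose x j1 : ℤ) := by ring
    _ = _ := by rw [h]

lemma lemA_step1 (k1 k2 V : ℕ) (hV : k1 + k2 + 1 ≤ V)
    (ih : ∀ x y : ℕ, ((x:ℤ)+1)^k1 * ((x:ℤ)+(y:ℤ)+2)^k2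
      = ∑ j1 ∈ Finset.range (V+1), ∑ j2 ∈ Finset.range (V+1),
          (Nat.factorial j1 : ℤ) * (Nat.factorial j2 : ℤ) * Rc k1 k2 j1 j2 *
            (Nat.choose x j1 : ℤ) * (Nat.choose y j2 : ℤ))
    (x y : ℕ) :
    ((x:ℤ)+1)^(k1+1) * ((x:ℤ)+(y:ℤ)+2)^k2
      = ∑ j1 ∈ Finset.range (V+1), ∑ j2 ∈ Finset.range (V+1),
          (Nat.factorial j1 : ℤ) * (Nat.factorial j2 : ℤ) * Rc (k1+1) k2 j1 j2 *
            (Nat.choose x j1 : ℤ) * (Nat.choose y j2 : ℤ) := by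
  have h0 : ((x:ℤ)+1)^(k1+1) * ((x:ℤ)+(y:ℤ)+2)^k2
      = (((x:ℤ)+1)^k1 * ((x:ℤ)+(y:ℤ)+2)^k2) * ((x:ℤ)+1) := by ring
  rw [h0, ih, Finset.sum_mul]
  have key1 : ∀ j1 ∈ Finset.range (V+1),
      (∑ j2 ∈ Finset.range (V+1),
        (Nat.factorial j1 : ℤ) * (Nat.factorial j2 : ℤ) * Rc k1 k2 j1 j2 *
          (Nat.choose x j1 : ℤ) * (Nat.choose y j2 : ℤ)) * ((x:ℤ)+1)
      = Fa k1 k2 V y j1 * (Nat.choose x (j1+1) : ℤ)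
        + Fa k1 k2 V y j1 * (Nat.choose x j1 : ℤ) := by
    intro j1 _
    unfold Fa
    rw [Finset.sum_mul, Finset.sum_mul, Finset.sum_mul, ← Finset.sum_add_distrib]
    apply Finset.sum_congr rfl
    intro j2 _
    have := choose_mul_xp1 x j1
    calc (Nat.factorial j1 : ℤ) * (Nat.factorial j2 : ℤ) * Rc k1 k2 j1 j2 *
          (Nat.choose x j1 : ℤ) * (Nat.choose y j2 : ℤ) * ((x:ℤ)+1)
        = (Nat.factorial j1 : ℤ) * (Nat.factorial j2 : ℤ) * Rc k1 k2 j1 j2 *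
            (Nat.choose y j2 : ℤ) * (((x:ℤ)+1) * (Nat.choose x j1 : ℤ)) := by ring
      _ = _ := by rw [this]; ring
  rw [Finset.sum_congr rfl key1, Finset.sum_add_distrib]
  have htop : Fa k1 k2 V y V = 0 := by
    unfold Fa
    apply Finset.sum_eq_zero
    intro j2 _
    rw [Rc_eq_zero_left (by omega)]
    ring
  rw [shift_sum V (Fa k1 k2 V y) (fun j => (Nat.choose x j : ℤ)) htop]
  rw [← Finset.sum_add_distrib]
  apply Finset.sum_congr rfl
  intro j1 _
  have goal2 : (if j1 = 0 then 0 else Fa k1 k2 V y (j1-1)) + Fa k1 k2 V y j1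
      = ∑ j2 ∈ Finset.range (V+1),
          (Nat.factorial j1 : ℤ) * (Nat.factorial j2 : ℤ) * Rc (k1+1) k2 j1 j2 *
            (Nat.choose y j2 : ℤ) := by
    rcases j1 with _ | i
    · rw [if_pos rfl, zero_add]
      unfold Fa
      apply Finset.sum_congr rfl
      intro j2 _
      rw [Rc_rec_left, if_pos rfl]
      push_cast; ring
    · rw [if_neg (Nat.succ_ne_zero _), Nat.add_sub_cancel]
      unfold Fa
      rw [← Finset.sum_add_distrib]
      apply Finset.sum_congr rfl
      intro j2 _
      rw [Rc_rec_left, if_neg (Nat.succ_ne_zero _), Nat.add_sub_cancel, Nat.factorial_succ]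
      push_cast; ring
  calc (if j1 = 0 then 0 else Fa k1 k2 V y (j1-1)) * (Nat.choose x j1 : ℤ)
        + Fa k1 k2 V y j1 * (Nat.choose x j1 : ℤ)
      = ((if j1 = 0 then 0 else Fa k1 k2 V y (j1-1)) + Fa k1 k2 V y j1) *
          (Nat.choose x j1 : ℤ) := by ring
    _ = (∑ j2 ∈ Finset.range (V+1),
          (Nat.factorial j1 : ℤ) * (Nat.factorial j2 : ℤ) * Rc (k1+1) k2 j1 j2 *
            (Nat.choose y j2 : ℤ)) * (Nat.choose x j1 : ℤ) := by rw [goal2]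
    _ = _ := by
          rw [Finset.sum_mul]
          apply Finset.sum_congr rfl
          intro j2 _
          ring

lemma choose_mul_xy2 (x y j1 j2 : ℕ) :
    ((x:ℤ)+(y:ℤ)+2) * ((Nat.choose x j1 : ℤ) * (Nat.choose y j2 : ℤ))
      = ((j1:ℤ)+1)*(Nat.choose x (j1+1) : ℤ)*(Nat.choose y j2 : ℤ)
        + ((j2:ℤ)+1)*(Nat.choose x j1 : ℤ)*(Nat.choose y (j2+1) : ℤ)
        + ((j1:ℤ)+(j2:ℤ)+2)*(Nat.choose x j1 : ℤ)*(Nat.choose y j2 : ℤ) := by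
  have h1 := int_choose_shift x j1
  have h2 := int_choose_shift y j2
  calc ((x:ℤ)+(y:ℤ)+2) * ((Nat.choose x j1 : ℤ) * (Nat.choose y j2 : ℤ))
      = (((x:ℤ)-j1) * (Nat.choose x j1 : ℤ))*(Nat.choose y j2 : ℤ)
        + (((y:ℤ)-j2) * (Nat.choose y j2 : ℤ))*(Nat.choose x j1 : ℤ)
        + ((j1:ℤ)+(j2:ℤ)+2)*(Nat.choose x j1 : ℤ)*(Nat.choose y j2 : ℤ) := by ring
    _ = _ := by rw [h1, h2]; ring

/-- second auxiliary inner sum -/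
def Ga (k1 k2 V x j1 j2 : ℕ) : ℤ :=
  ((j2:ℤ)+1) * (Nat.factorial j1 : ℤ) * (Nat.factorial j2 : ℤ) * Rc k1 k2 j1 j2 *
    (Nat.choose x j1 : ℤ)

lemma lemA_step2 (k1 k2 V : ℕ) (hV : k1 + k2 + 1 ≤ V)
    (ih : ∀ x y : ℕ, ((x:ℤ)+1)^k1 * ((x:ℤ)+(y:ℤ)+2)^k2
      = ∑ j1 ∈ Finset.range (V+1), ∑ j2 ∈ Finset.range (V+1),
          (Nat.factorial j1 : ℤ) * (Nat.factorial j2 : ℤ) * Rc k1 k2 j1 j2 *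
            (Nat.choose x j1 : ℤ) * (Nat.choose y j2 : ℤ))
    (x y : ℕ) :
    ((x:ℤ)+1)^k1 * ((x:ℤ)+(y:ℤ)+2)^(k2+1)
      = ∑ j1 ∈ Finset.range (V+1), ∑ j2 ∈ Finset.range (V+1),
          (Nat.factorial j1 : ℤ) * (Nat.factorial j2 : ℤ) * Rc k1 (k2+1) j1 j2 *
            (Nat.choose x j1 : ℤ) * (Nat.choose y j2 : ℤ) := by
  have h0 : ((x:ℤ)+1)^k1 * ((x:ℤ)+(y:ℤ)+2)^(k2+1)
      = (((x:ℤ)+1)^k1 * ((x:ℤ)+(y:ℤ)+2)^k2) * ((x:ℤ)+(y:ℤ)+2) := by ring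
  rw [h0, ih, Finset.sum_mul]
  have key1 : ∀ j1 ∈ Finset.range (V+1),
      (∑ j2 ∈ Finset.range (V+1),
        (Nat.factorial j1 : ℤ) * (Nat.factorial j2 : ℤ) * Rc k1 k2 j1 j2 *
          (Nat.choose x j1 : ℤ) * (Nat.choose y j2 : ℤ)) * ((x:ℤ)+(y:ℤ)+2)
      = Fa k1 k2 V y j1 * (Nat.choose x (j1+1) : ℤ)
        + (∑ j2 ∈ Finset.range (V+1), Ga k1 k2 V x j1 j2 * (Nat.choose y (j2+1) : ℤ))
        + (∑ j2 ∈ Finset.range (V+1),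
            ((j1:ℤ)+(j2:ℤ)+2) * (Nat.factorial j1 : ℤ) * (Nat.factorial j2 : ℤ) *
              Rc k1 k2 j1 j2 * (Nat.choose x j1 : ℤ) * (Nat.choose y j2 : ℤ)) := by
    intro j1 _
    unfold Fa Ga
    rw [Finset.sum_mul, Finset.sum_mul, ← Finset.sum_add_distrib, ← Finset.sum_add_distrib]
    apply Finset.sum_congr rfl
    intro j2 _
    have h := choose_mul_xy2 x y j1 j2
    calc (Nat.factorial j1 : ℤ) * (Nat.factorial j2 : ℤ) * Rc k1 k2 j1 j2 *
          (Nat.choose x j1 : ℤ) * (Nat.choose y j2 : ℤ) * ((x:ℤ)+(y:ℤ)+2)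
        = (Nat.factorial j1 : ℤ) * (Nat.factorial j2 : ℤ) * Rc k1 k2 j1 j2 *
            (((x:ℤ)+(y:ℤ)+2) * ((Nat.choose x j1 : ℤ) * (Nat.choose y j2 : ℤ))) := by ring
      _ = _ := by rw [h]; ring
  rw [Finset.sum_congr rfl key1, Finset.sum_add_distrib, Finset.sum_add_distrib]
  have htop : Fa k1 k2 V y V = 0 := by
    unfold Fa
    apply Finset.sum_eq_zero
    intro j2 _
    rw [Rc_eq_zero_left (by omega)]
    ring
  rw [shift_sum V (Fa k1 k2 V y) (fun j => (Nat.choose x j : ℤ)) htop]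
  have key2 : ∀ j1 ∈ Finset.range (V+1),
      (∑ j2 ∈ Finset.range (V+1), Ga k1 k2 V x j1 j2 * (Nat.choose y (j2+1) : ℤ))
      = ∑ j2 ∈ Finset.range (V+1),
          (if j2 = 0 then 0 else Ga k1 k2 V x j1 (j2-1)) * (Nat.choose y j2 : ℤ) := by
    intro j1 _
    apply shift_sum V (Ga k1 k2 V x j1) (fun j => (Nat.choose y j : ℤ))
    unfold Ga
    rw [Rc_eq_zero_right (by omega)]
    ring
  rw [Finset.sum_congr rfl key2]
  rw [← Finset.sum_add_distrib, ← Finset.sum_add_distrib]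
  apply Finset.sum_congr rfl
  intro j1 _
  have hFa : (if j1 = 0 then 0 else Fa k1 k2 V y (j1-1)) * (Nat.choose x j1 : ℤ)
      = ∑ j2 ∈ Finset.range (V+1),
          (if j1 = 0 then 0 else
            (((j1:ℤ)-1)+1) * (Nat.factorial (j1-1) : ℤ) * (Nat.factorial j2 : ℤ) *
              Rc k1 k2 (j1-1) j2 * (Nat.choose y j2 : ℤ)) * (Nat.choose x j1 : ℤ) := by
    rcases j1 with _ | i
    · simp
    · rw [if_neg (Nat.succ_ne_zero _)]
      unfold Fa
      rw [Finset.sum_mul]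
      apply Finset.sum_congr rfl
      intro j2 _
      rw [if_neg (Nat.succ_ne_zero _), Nat.add_sub_cancel]
      push_cast
      ring
  rw [hFa, ← Finset.sum_add_distrib, ← Finset.sum_add_distrib]
  apply Finset.sum_congr rfl
  intro j2 _
  rw [Rc_rec_right]
  rcases j1 with _ | s <;> rcases j2 with _ | t
  · simp only [if_pos rfl]
    unfold Ga
    push_cast
    ring
  · simp only [if_pos rfl, if_neg (Nat.succ_ne_zero t), Nat.add_sub_cancel]
    unfold Ga
    rw [Nat.factorial_succ]
    push_cast
    ring
  · simp only [if_pos rfl, if_neg (Nat.succ_ne_zero s), Nat.add_sub_cancel]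
    unfold Ga
    rw [Nat.factorial_succ]
    push_cast
    ring
  · simp only [if_neg (Nat.succ_ne_zero s), if_neg (Nat.succ_ne_zero t), Nat.add_sub_cancel]
    unfold Ga
    rw [Nat.factorial_succ s, Nat.factorial_succ t]
    push_cast
    ring

lemma lemA (k1 k2 V : ℕ) (hV : k1 + k2 ≤ V) (x y : ℕ) :
    ((x:ℤ)+1)^k1 * ((x:ℤ)+(y:ℤ)+2)^k2
      = ∑ j1 ∈ Finset.range (V+1), ∑ j2 ∈ Finset.range (V+1),
          (Nat.factorial j1 : ℤ) * (Nat.factorial j2 : ℤ) * Rc k1 k2 j1 j2 *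
            (Nat.choose x j1 : ℤ) * (Nat.choose y j2 : ℤ) := by
  induction k1 generalizing k2 V x y with
  | zero =>
    induction k2 generalizing V x y with
    | zero => simpa using lemA_base V x y
    | succ k2 ih2 =>
      exact lemA_step2 0 k2 V (by omega) (fun x y => ih2 V (by omega) x y) x y
  | succ k1 ih =>
    exact lemA_step1 k1 k2 V (by omega) (fun x y => ih k2 V (by omega) x y) x y

lemma choose_id (t j : ℕ) :
    ((t:ℤ)+1) * (Nat.choose (t+1) (j+1) : ℤ)
      = ((t:ℤ)+(j:ℤ)+2) * (Nat.choose t (j+1) : ℤ) + ((j:ℤ)+1) * (Nat.choose t j : ℤ) := by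
  have h1 : ((t+1) * Nat.choose t j : ℕ) = (Nat.choose (t+1) (j+1) * (j+1) : ℕ) :=
    Nat.add_one_mul_choose_eq t j
  have h2 : (Nat.choose (t+1) (j+1) : ℕ) = Nat.choose t j + Nat.choose t (j+1) :=
    Nat.choose_succ_succ t j
  have h1' : ((t:ℤ)+1) * (Nat.choose t j : ℤ) = (Nat.choose (t+1) (j+1) : ℤ) * ((j:ℤ)+1) := by
    exact_mod_cast congrArg (Nat.cast : ℕ → ℤ) h1
  have h2' : (Nat.choose (t+1) (j+1) : ℤ) = (Nat.choose t j : ℤ) + (Nat.choose t (j+1) : ℤ) := by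
    exact_mod_cast congrArg (Nat.cast : ℕ → ℤ) h2
  rw [h2'] at h1' ⊢
  linarith [h1']

lemma lemB (N : ℕ) : ∀ j : ℕ,
    ∑ m ∈ Finset.range (N+1),
      (-1:ℤ)^m * (Nat.factorial m : ℤ) * (Nat.choose m j : ℤ) * (S2 N m : ℤ)
    = (-1:ℤ)^N * (Nat.factorial j : ℤ) * (S2 (N+1) (j+1) : ℤ) := by
  induction N with
  | zero =>
    intro j
    rw [Finset.sum_range_one]
    rcases j with _ | j
    · norm_num [show S2 0 0 = 1 from rfl, show S2 1 1 = 1 from rfl]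
    · rw [Nat.choose_eq_zero_of_lt (by omega), S2_succ,
        S2_eq_zero (show 0 < j+1 by omega), S2_eq_zero (show 0 < j+2 by omega)]
      push_cast; ring
  | succ N ih =>
    intro j
    rw [Finset.sum_range_succ'
      (fun m => (-1:ℤ)^m * (Nat.factorial m : ℤ) * (Nat.choose m j : ℤ) * (S2 (N+1) m : ℤ)) (N+1)]
    have hf0 : (-1:ℤ)^0 * (Nat.factorial 0 : ℤ) * (Nat.choose 0 j : ℤ) * (S2 (N+1) 0 : ℤ) = 0 := by
      rw [S2_zero_right]; push_cast; ring
    rw [hf0, add_zero]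
    have hsplit : ∀ t ∈ Finset.range (N+1),
        (-1:ℤ)^(t+1) * (Nat.factorial (t+1) : ℤ) * (Nat.choose (t+1) j : ℤ) * (S2 (N+1) (t+1) : ℤ)
        = (-1:ℤ)^(t+1) * (Nat.factorial (t+1) : ℤ) * (Nat.choose (t+1) j : ℤ) * (S2 N t : ℤ)
          + (-1:ℤ)^(t+1) * (Nat.factorial (t+1) : ℤ) * (Nat.choose (t+1) j : ℤ) * ((t:ℤ)+1) *
              (S2 N (t+1) : ℤ) := by
      intro t _
      rw [S2_succ]
      push_cast; ring
    rw [Finset.sum_congr rfl hsplit, Finset.sum_add_distrib]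
    have hg : (∑ t ∈ Finset.range (N+1),
        (-1:ℤ)^(t+1) * (Nat.factorial (t+1) : ℤ) * (Nat.choose (t+1) j : ℤ) * ((t:ℤ)+1) *
          (S2 N (t+1) : ℤ))
        = ∑ m ∈ Finset.range (N+1),
            (-1:ℤ)^m * (Nat.factorial m : ℤ) * (Nat.choose m j : ℤ) * (m:ℤ) * (S2 N m : ℤ) := by
      set g : ℕ → ℤ := fun m =>
        (-1:ℤ)^m * (Nat.factorial m : ℤ) * (Nat.choose m j : ℤ) * (m:ℤ) * (S2 N m : ℤ) with hgdef
      have h1 := Finset.sum_range_succ' g (N+1)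
      have h2 := Finset.sum_range_succ g (N+1)
      have hg0 : g 0 = 0 := by simp [hgdef]
      have hgtop : g (N+1) = 0 := by
        simp only [hgdef]
        rw [S2_eq_zero (show N < N+1 by omega)]
        push_cast; ring
      have heq : ∀ t ∈ Finset.range (N+1),
          (-1:ℤ)^(t+1) * (Nat.factorial (t+1) : ℤ) * (Nat.choose (t+1) j : ℤ) * ((t:ℤ)+1) *
            (S2 N (t+1) : ℤ) = g (t+1) := by
        intro t _
        simp only [hgdef]
        push_cast; ring
      rw [Finset.sum_congr rfl heq]
      rw [hg0, add_zero] at h1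
      rw [hgtop, add_zero] at h2
      linarith [h1, h2]
    rw [hg, ← Finset.sum_add_distrib]
    rcases j with _ | jj
    · have hpt : ∀ t ∈ Finset.range (N+1),
          (-1:ℤ)^(t+1) * (Nat.factorial (t+1) : ℤ) * (Nat.choose (t+1) 0 : ℤ) * (S2 N t : ℤ)
            + (-1:ℤ)^t * (Nat.factorial t : ℤ) * (Nat.choose t 0 : ℤ) * (t:ℤ) * (S2 N t : ℤ)
          = -((-1:ℤ)^t * (Nat.factorial t : ℤ) * (Nat.choose t 0 : ℤ) * (S2 N t : ℤ)) := by
        intro t _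
        rw [Nat.choose_zero_right, Nat.choose_zero_right, Nat.factorial_succ]
        push_cast; ring
      rw [Finset.sum_congr rfl hpt, Finset.sum_neg_distrib, ih 0]
      rw [show S2 (N+1+1) (0+1) = S2 (N+1) 0 + 1 * S2 (N+1) 1 from rfl, S2_zero_right]
      push_cast; ring
    · have hpt : ∀ t ∈ Finset.range (N+1),
          (-1:ℤ)^(t+1) * (Nat.factorial (t+1) : ℤ) * (Nat.choose (t+1) (jj+1) : ℤ) * (S2 N t : ℤ)
            + (-1:ℤ)^t * (Nat.factorial t : ℤ) * (Nat.choose t (jj+1) : ℤ) * (t:ℤ) * (S2 N t : ℤ)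
          = (-((jj:ℤ)+2)) * ((-1:ℤ)^t * (Nat.factorial t : ℤ) * (Nat.choose t (jj+1) : ℤ) * (S2 N t : ℤ))
            + (-((jj:ℤ)+1)) * ((-1:ℤ)^t * (Nat.factorial t : ℤ) * (Nat.choose t jj : ℤ) * (S2 N t : ℤ)) := by
        intro t _
        have hid := choose_id t jj
        rw [Nat.factorial_succ]
        push_cast
        linear_combination ((-1:ℤ)^(t+1) * (Nat.factorial t : ℤ) * (S2 N t : ℤ)) * hid
      rw [Finset.sum_congr rfl hpt, Finset.sum_add_distrib, ← Finset.mul_sum, ← Finset.mul_sum,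
        ih (jj+1), ih jj]
      rw [show S2 (N+1+1) (jj+1+1) = S2 (N+1) (jj+1) + (jj+1+1) * S2 (N+1) (jj+1+1) from rfl]
      push_cast [Nat.factorial_succ]
      ring

lemma lemB' (N j P : ℕ) (h : N + 1 ≤ P) :
    ∑ m ∈ Finset.range P,
      (-1:ℤ)^m * (Nat.factorial m : ℤ) * (Nat.choose m j : ℤ) * (S2 N m : ℤ)
    = (-1:ℤ)^N * (Nat.factorial j : ℤ) * (S2 (N+1) (j+1) : ℤ) := by
  rw [← lemB N j]
  apply (Finset.sum_subset (Finset.range_subset_range.mpr h) _).symm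
  intro m hm hm'
  rw [Finset.mem_range] at hm hm'
  rw [S2_eq_zero (show N < m by omega)]
  push_cast; ring

lemma swap3 (s t u : Finset ℕ) (f : ℕ → ℕ → ℕ → ℤ) :
    (∑ a ∈ s, ∑ b ∈ t, ∑ c ∈ u, f a b c) = ∑ c ∈ u, ∑ a ∈ s, ∑ b ∈ t, f a b c := by
  have h1 : (∑ a ∈ s, ∑ b ∈ t, ∑ c ∈ u, f a b c)
      = ∑ a ∈ s, ∑ c ∈ u, ∑ b ∈ t, f a b c := by
    apply Finset.sum_congr rfl
    intro a _
    exact Finset.sum_comm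
  rw [h1]
  exact Finset.sum_comm

lemma swap4 (s t u v : Finset ℕ) (f : ℕ → ℕ → ℕ → ℕ → ℤ) :
    (∑ a ∈ s, ∑ b ∈ t, ∑ c ∈ u, ∑ d ∈ v, f a b c d)
      = ∑ c ∈ u, ∑ d ∈ v, ∑ a ∈ s, ∑ b ∈ t, f a b c d := by
  calc (∑ a ∈ s, ∑ b ∈ t, ∑ c ∈ u, ∑ d ∈ v, f a b c d)
      = ∑ c ∈ u, ∑ a ∈ s, ∑ b ∈ t, ∑ d ∈ v, f a b c d :=
        swap3 s t u (fun a b c => ∑ d ∈ v, f a b c d)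
    _ = ∑ c ∈ u, ∑ d ∈ v, ∑ a ∈ s, ∑ b ∈ t, f a b c d := by
        apply Finset.sum_congr rfl
        intro c _
        exact swap3 s t v (fun a b d => f a b c d)

/-- Double-indexed poly-Bernoulli number with negative upper indices
`B_{ℓ1,ℓ2}^{(-k1,-k2)}`, via the explicit formula of Theorem 2.1. -/
def B2negA (l1 l2 k1 k2 : ℕ) : ℤ :=
  ∑ m1 ∈ Finset.range (l1 + l2 + 1), ∑ m2 ∈ Finset.range (l1 + l2 + 1),
    (-1 : ℤ) ^ (m1 + m2 + l1 + l2) * (Nat.factorial m1 : ℤ) * (Nat.factorial m2 : ℤ) *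
      ((m1 : ℤ) + 1) ^ k1 * ((m1 : ℤ) + (m2 : ℤ) + 2) ^ k2 *
      ∑ n ∈ Finset.range (l1 + l2 + 1),
        (S2 n m1 : ℤ) * (S2 (l1 + l2 - n) m2 : ℤ) *
          (if l1 ≤ n then (Nat.choose l2 (n - l1) : ℤ) else 0)

lemma pull2 (s t : Finset ℕ) (C : ℤ) (f : ℕ → ℕ → ℤ) :
    (∑ a ∈ s, ∑ b ∈ t, C * f a b) = C * ∑ a ∈ s, ∑ b ∈ t, f a b := by
  rw [Finset.mul_sum]
  refine Finset.sum_congr rfl fun a _ => ?_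
  rw [Finset.mul_sum]

lemma key (l1 l2 k1 k2 : ℕ) :
    B2negA l1 l2 k1 k2
      = ∑ j1 ∈ Finset.range (l1+l2+k1+k2+1), ∑ j2 ∈ Finset.range (l1+l2+k1+k2+1),
          ((Nat.factorial j1 : ℤ) * (Nat.factorial j1 : ℤ)) *
            ((Nat.factorial j2 : ℤ) * (Nat.factorial j2 : ℤ)) *
            Rc k1 k2 j1 j2 * Rc l1 l2 j1 j2 := by
  set L := l1 + l2 with hL
  set V := l1 + l2 + k1 + k2 with hV
  have step1 : B2negA l1 l2 k1 k2
      = ∑ m1 ∈ Finset.range (L+1), ∑ m2 ∈ Finset.range (L+1),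
          ∑ j1 ∈ Finset.range (V+1), ∑ j2 ∈ Finset.range (V+1),
            ((Nat.factorial j1 : ℤ) * (Nat.factorial j2 : ℤ) * Rc k1 k2 j1 j2) *
              ((-1 : ℤ) ^ (m1 + m2 + l1 + l2) * (Nat.factorial m1 : ℤ) *
                (Nat.factorial m2 : ℤ) * (Nat.choose m1 j1 : ℤ) * (Nat.choose m2 j2 : ℤ) *
                ∑ n ∈ Finset.range (L+1),
                  (S2 n m1 : ℤ) * (S2 (l1 + l2 - n) m2 : ℤ) *
                    (if l1 ≤ n then (Nat.choose l2 (n - l1) : ℤ) else 0)) := by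
    unfold B2negA
    apply Finset.sum_congr rfl
    intro m1 _
    apply Finset.sum_congr rfl
    intro m2 _
    have hA := lemA k1 k2 V (by omega) m1 m2
    calc (-1 : ℤ) ^ (m1 + m2 + l1 + l2) * (Nat.factorial m1 : ℤ) * (Nat.factorial m2 : ℤ) *
          ((m1 : ℤ) + 1) ^ k1 * ((m1 : ℤ) + (m2 : ℤ) + 2) ^ k2 *
          (∑ n ∈ Finset.range (l1 + l2 + 1),
            (S2 n m1 : ℤ) * (S2 (l1 + l2 - n) m2 : ℤ) *
              (if l1 ≤ n then (Nat.choose l2 (n - l1) : ℤ) else 0))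
        = (((m1:ℤ) + 1) ^ k1 * ((m1:ℤ) + (m2:ℤ) + 2) ^ k2) *
            ((-1 : ℤ) ^ (m1 + m2 + l1 + l2) * (Nat.factorial m1 : ℤ) * (Nat.factorial m2 : ℤ) *
              ∑ n ∈ Finset.range (L+1),
                (S2 n m1 : ℤ) * (S2 (l1 + l2 - n) m2 : ℤ) *
                  (if l1 ≤ n then (Nat.choose l2 (n - l1) : ℤ) else 0)) := by rw [hL]; ring
      _ = _ := by
          rw [hA, Finset.sum_mul]
          apply Finset.sum_congr rfl
          intro j1 _
          rw [Finset.sum_mul]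
          apply Finset.sum_congr rfl
          intro j2 _
          ring
  rw [step1, swap4]
  apply Finset.sum_congr rfl
  intro j1 hj1
  apply Finset.sum_congr rfl
  intro j2 hj2
  rw [pull2]
  have inner : (∑ m1 ∈ Finset.range (L+1), ∑ m2 ∈ Finset.range (L+1),
      (-1 : ℤ) ^ (m1 + m2 + l1 + l2) * (Nat.factorial m1 : ℤ) *
        (Nat.factorial m2 : ℤ) * (Nat.choose m1 j1 : ℤ) * (Nat.choose m2 j2 : ℤ) *
        ∑ n ∈ Finset.range (L+1),
          (S2 n m1 : ℤ) * (S2 (l1 + l2 - n) m2 : ℤ) *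
            (if l1 ≤ n then (Nat.choose l2 (n - l1) : ℤ) else 0))
      = (Nat.factorial j1 : ℤ) * (Nat.factorial j2 : ℤ) * Rc l1 l2 j1 j2 := by
    have hswap : (∑ m1 ∈ Finset.range (L+1), ∑ m2 ∈ Finset.range (L+1),
        (-1 : ℤ) ^ (m1 + m2 + l1 + l2) * (Nat.factorial m1 : ℤ) *
          (Nat.factorial m2 : ℤ) * (Nat.choose m1 j1 : ℤ) * (Nat.choose m2 j2 : ℤ) *
          ∑ n ∈ Finset.range (L+1),
            (S2 n m1 : ℤ) * (S2 (l1 + l2 - n) m2 : ℤ) *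
              (if l1 ≤ n then (Nat.choose l2 (n - l1) : ℤ) else 0))
        = ∑ n ∈ Finset.range (L+1), ∑ m1 ∈ Finset.range (L+1), ∑ m2 ∈ Finset.range (L+1),
            (-1 : ℤ) ^ (m1 + m2 + l1 + l2) * (Nat.factorial m1 : ℤ) *
              (Nat.factorial m2 : ℤ) * (Nat.choose m1 j1 : ℤ) * (Nat.choose m2 j2 : ℤ) *
              ((S2 n m1 : ℤ) * (S2 (l1 + l2 - n) m2 : ℤ) *
                (if l1 ≤ n then (Nat.choose l2 (n - l1) : ℤ) else 0)) := by
      rw [← swap3]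
      apply Finset.sum_congr rfl
      intro m1 _
      apply Finset.sum_congr rfl
      intro m2 _
      rw [Finset.mul_sum]
    rw [hswap]
    have hn : ∀ n ∈ Finset.range (L+1),
        (∑ m1 ∈ Finset.range (L+1), ∑ m2 ∈ Finset.range (L+1),
          (-1 : ℤ) ^ (m1 + m2 + l1 + l2) * (Nat.factorial m1 : ℤ) *
            (Nat.factorial m2 : ℤ) * (Nat.choose m1 j1 : ℤ) * (Nat.choose m2 j2 : ℤ) *
            ((S2 n m1 : ℤ) * (S2 (l1 + l2 - n) m2 : ℤ) *
              (if l1 ≤ n then (Nat.choose l2 (n - l1) : ℤ) else 0)))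
        = (Nat.factorial j1 : ℤ) * (Nat.factorial j2 : ℤ) *
            ((if l1 ≤ n then (Nat.choose l2 (n - l1) : ℤ) else 0) *
              (S2 (n+1) (j1+1) : ℤ) * (S2 (l1 + l2 - n + 1) (j2+1) : ℤ)) := by
      intro n hn'
      rw [Finset.mem_range] at hn'
      have hfac : (∑ m1 ∈ Finset.range (L+1), ∑ m2 ∈ Finset.range (L+1),
          (-1 : ℤ) ^ (m1 + m2 + l1 + l2) * (Nat.factorial m1 : ℤ) *
            (Nat.factorial m2 : ℤ) * (Nat.choose m1 j1 : ℤ) * (Nat.choose m2 j2 : ℤ) *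
            ((S2 n m1 : ℤ) * (S2 (l1 + l2 - n) m2 : ℤ) *
              (if l1 ≤ n then (Nat.choose l2 (n - l1) : ℤ) else 0)))
          = ((-1:ℤ)^(l1+l2) * (if l1 ≤ n then (Nat.choose l2 (n - l1) : ℤ) else 0)) *
              ((∑ m1 ∈ Finset.range (L+1),
                (-1:ℤ)^m1 * (Nat.factorial m1 : ℤ) * (Nat.choose m1 j1 : ℤ) * (S2 n m1 : ℤ)) *
               (∑ m2 ∈ Finset.range (L+1),
                (-1:ℤ)^m2 * (Nat.factorial m2 : ℤ) * (Nat.choose m2 j2 : ℤ) *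
                  (S2 (l1 + l2 - n) m2 : ℤ))) := by
        rw [Finset.sum_mul_sum, Finset.mul_sum]
        apply Finset.sum_congr rfl
        intro m1 _
        rw [Finset.mul_sum]
        apply Finset.sum_congr rfl
        intro m2 _
        have hsign : (-1:ℤ)^(m1 + m2 + l1 + l2) = (-1:ℤ)^m1 * (-1:ℤ)^m2 * (-1:ℤ)^(l1+l2) := by
          rw [show m1 + m2 + l1 + l2 = m1 + (m2 + (l1 + l2)) by omega, pow_add, pow_add]
          ring
        rw [hsign]
        ring
      rw [hfac, lemB' n j1 (L+1) (by omega), lemB' (l1+l2-n) j2 (L+1) (by omega)]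
      have hs : (-1:ℤ)^(l1+l2) * ((-1:ℤ)^n * ((-1:ℤ)^(l1+l2-n))) = 1 := by
        rw [← pow_add, show n + (l1 + l2 - n) = l1 + l2 by omega, ← pow_add]
        exact Even.neg_one_pow ⟨l1+l2, by ring⟩
      calc ((-1:ℤ)^(l1+l2) * (if l1 ≤ n then (Nat.choose l2 (n - l1) : ℤ) else 0)) *
            (((-1:ℤ)^n * (Nat.factorial j1 : ℤ) * (S2 (n+1) (j1+1) : ℤ)) *
             ((-1:ℤ)^(l1+l2-n) * (Nat.factorial j2 : ℤ) * (S2 (l1+l2-n+1) (j2+1) : ℤ)))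
          = ((-1:ℤ)^(l1+l2) * ((-1:ℤ)^n * ((-1:ℤ)^(l1+l2-n)))) *
              ((if l1 ≤ n then (Nat.choose l2 (n - l1) : ℤ) else 0) *
                (Nat.factorial j1 : ℤ) * (S2 (n+1) (j1+1) : ℤ) *
                (Nat.factorial j2 : ℤ) * (S2 (l1+l2-n+1) (j2+1) : ℤ)) := by ring
        _ = _ := by rw [hs]; try ring
    rw [Finset.sum_congr rfl hn, ← Finset.mul_sum]
    rw [show Rc l1 l2 j1 j2 = ∑ n ∈ Finset.range (l1 + l2 + 1),
      (if l1 ≤ n then (Nat.choose l2 (n - l1) : ℤ) else 0) * (S2 (n+1) (j1+1) : ℤ) *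
        (S2 (l1 + l2 - n + 1) (j2+1) : ℤ) from rfl]
  rw [inner]
  ring

/-- Duality of double-indexed poly-Bernoulli numbers with negative upper
indices: `B_{m1,m2}^{(-k1,-k2)} = B_{k1,k2}^{(-m1,-m2)}`. -/
theorem doublePolyBernoulli_duality (m1 m2 k1 k2 : ℕ) :
    B2negA m1 m2 k1 k2 = B2negA k1 k2 m1 m2 := by
  rw [key m1 m2 k1 k2, key k1 k2 m1 m2,
    show k1 + k2 + m1 + m2 = m1 + m2 + k1 + k2 by omega]
  apply Finset.sum_congr rfl
  intro j1 _
  apply Finset.sum_congr rfl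
  intro j2 _
  ring
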